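/- arXiv:1409.4219 — 4 statements merged into one kernel-verified Lean document; each statement's English description precedes it below -/
import Mathlib

section
/- Let F : C → D be a left exact functor between categories with finite limits and binary coproducts. Then F is coherent if and only if F preserves strong epimorphisms and the canonical comparison morphism F(X) + F(Y) → F(X + Y) is a strong epimorphism for all objects X, Y of C. -/
open CategoryTheory CategoryTheory.Limits

universe w₂ w v u

namespace AlgCoh

variable {C : Type u} [Category.{v} C]

/-- A cospan `(f, g)` over `Z` is jointly strongly epimorphic: whenever both legs,
after postcomposition with `φ : Z ⟶ P`, factor through a monomorphism `m : M ⟶ P`,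
there is a unique diagonal lift `l : Z ⟶ M` with `l ≫ m = φ`. -/
def JointlyStronglyEpi {X Y Z : C} (f : X ⟶ Z) (g : Y ⟶ Z) : Prop :=
  ∀ ⦃M P : C⦄ (m : M ⟶ P), Mono m → ∀ (φ : Z ⟶ P) (f' : X ⟶ M) (g' : Y ⟶ M),
    f' ≫ m = f ≫ φ → g' ≫ m = g ≫ φ → ∃! l : Z ⟶ M, l ≫ m = φ

/-- A functor preserves jointly strongly epimorphic cospans. -/
def PreservesJSEPairs {D : Type w} [Category.{w₂} D] (F : C ⥤ D) : Prop :=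
  ∀ ⦃X Y Z : C⦄ (f : X ⟶ Z) (g : Y ⟶ Z),
    JointlyStronglyEpi f g → JointlyStronglyEpi (F.map f) (F.map g)

/-- A coherent functor preserves finite limits and jointly strongly epimorphic pairs. -/
def CoherentFunctor {D : Type w} [Category.{w₂} D] (F : C ⥤ D) : Prop :=
  Nonempty (PreservesFiniteLimits F) ∧ PreservesJSEPairs F

lemma jse_epi_aux [HasEqualizers C] {X Y Z : C} {f : X ⟶ Z} {g : Y ⟶ Z}
    (h : JointlyStronglyEpi f g) {P : C} (u v : Z ⟶ P)
    (hu : f ≫ u = f ≫ v) (hv : g ≫ u = g ≫ v) : u = v := by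
  obtain ⟨l, hl, -⟩ := h (equalizer.ι u v) inferInstance (𝟙 Z)
    (equalizer.lift f hu) (equalizer.lift g hv) (by simp) (by simp)
  calc u = (l ≫ equalizer.ι u v) ≫ u := by rw [hl, Category.id_comp]
    _ = l ≫ equalizer.ι u v ≫ v := by rw [Category.assoc, equalizer.condition]
    _ = v := by rw [← Category.assoc, hl, Category.id_comp]

lemma jse_iff_strongEpi_desc [HasEqualizers C] [HasBinaryCoproducts C]
    {X Y Z : C} (f : X ⟶ Z) (g : Y ⟶ Z) :
    JointlyStronglyEpi f g ↔ StrongEpi (coprod.desc f g) := by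
  constructor
  · intro h
    haveI : Epi (coprod.desc f g) := ⟨fun u v huv => by
      refine jse_epi_aux h u v ?_ ?_
      · simpa [coprod.inl_desc, coprod.inr_desc] using coprod.inl ≫= huv
      · simpa [coprod.inl_desc, coprod.inr_desc] using coprod.inr ≫= huv⟩
    refine StrongEpi.mk' fun M P z hz u v sq => ?_
    haveI := hz
    obtain ⟨l, hl, -⟩ := h z hz v (coprod.inl ≫ u) (coprod.inr ≫ u)
      (by rw [Category.assoc, sq.w]; simp [coprod.inl_desc, coprod.inr_desc]) (by rw [Category.assoc, sq.w]; simp [coprod.inl_desc, coprod.inr_desc])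
    exact CommSq.HasLift.mk' ⟨l, by
      apply coprod.hom_ext <;> rw [← cancel_mono z] <;> simp [hl, sq.w], hl⟩
  · intro h M P m hm φ f' g' h1 h2
    haveI := hm
    have sq : CommSq (coprod.desc f' g') (coprod.desc f g) m φ :=
      ⟨by apply coprod.hom_ext <;> simp [h1, h2]⟩
    haveI := h.llp m
    exact ⟨sq.lift, sq.fac_right, fun l' hl' => by
      rw [← cancel_mono m, hl', sq.fac_right]⟩

lemma strongEpi_iff_jse [HasEqualizers C] {X Z : C} (f : X ⟶ Z) :
    StrongEpi f ↔ JointlyStronglyEpi f f := by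
  constructor
  · intro h M P m hm φ f' g' h1 _
    haveI := hm
    have sq : CommSq f' f m φ := ⟨h1⟩
    haveI := h.llp m
    exact ⟨sq.lift, sq.fac_right, fun l' hl' => by
      rw [← cancel_mono m, hl', sq.fac_right]⟩
  · intro h
    haveI : Epi f := ⟨fun u v huv => jse_epi_aux h u v huv huv⟩
    refine StrongEpi.mk' fun M P z hz u v sq => ?_
    haveI := hz
    obtain ⟨l, hl, -⟩ := h z hz v u u sq.w sq.w
    exact CommSq.HasLift.mk' ⟨l, by rw [← cancel_mono z, Category.assoc, hl, sq.w], hl⟩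

lemma jse_inl_inr [HasBinaryCoproducts C] (X Y : C) :
    JointlyStronglyEpi (coprod.inl : X ⟶ X ⨿ Y) coprod.inr := by
  intro M P m hm φ f' g' h1 h2
  haveI := hm
  exact ⟨coprod.desc f' g', by apply coprod.hom_ext <;> simp [coprod.inl_desc, coprod.inr_desc, h1, h2],
    fun l' hl' => by rw [← cancel_mono m, hl']; apply coprod.hom_ext <;> simp [coprod.inl_desc, coprod.inr_desc, h1, h2]⟩

/-- A left exact functor between finitely complete categories with binary
coproducts is coherent if and only if it preserves strong epimorphisms and all
the canonical comparison morphisms `F X ⨿ F Y ⟶ F (X ⨿ Y)` are strong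
epimorphisms. -/
theorem coherent_iff_preserves_strongEpi_and_comparison
    {D : Type w} [Category.{w₂} D]
    [HasFiniteLimits C] [HasBinaryCoproducts C]
    [HasFiniteLimits D] [HasBinaryCoproducts D]
    (F : C ⥤ D) [PreservesFiniteLimits F] :
    CoherentFunctor F ↔
      ((∀ {X Y : C} (f : X ⟶ Y), StrongEpi f → StrongEpi (F.map f)) ∧
        ∀ X Y : C,
          StrongEpi (coprod.desc (F.map (coprod.inl : X ⟶ X ⨿ Y))
            (F.map (coprod.inr : Y ⟶ X ⨿ Y)))) := by
  constructor
  · intro h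
    refine ⟨fun {X Y} f hf => ?_, fun X Y => ?_⟩
    · rw [strongEpi_iff_jse]
      exact h.2 f f ((strongEpi_iff_jse f).mp hf)
    · exact (jse_iff_strongEpi_desc (F.map coprod.inl) (F.map coprod.inr)).mp
        (h.2 _ _ (jse_inl_inr X Y))
  · rintro ⟨h1, h2⟩
    refine ⟨⟨inferInstance⟩, fun X Y Z f g hfg => ?_⟩
    haveI hd : StrongEpi (F.map (coprod.desc f g)) :=
      h1 _ ((jse_iff_strongEpi_desc f g).mp hfg)
    haveI hc := h2 X Y
    have key : coprod.desc (F.map f) (F.map g) =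
        coprod.desc (F.map (coprod.inl : X ⟶ X ⨿ Y)) (F.map (coprod.inr : Y ⟶ X ⨿ Y)) ≫
          F.map (coprod.desc f g) := by
      apply coprod.hom_ext <;> simp [coprod.inl_desc, coprod.inr_desc, ← F.map_comp]
    rw [jse_iff_strongEpi_desc, key]
    exact strongEpi_comp _ _

end AlgCoh
end

section
/- In a unital category, for every object X, the pullback functor along the diagonal ⟨1_X, 1_X⟩ : X → X × X, from the slice over X × X to the slice over X, is coherent only if X is a zero object. -/
open CategoryTheory CategoryTheory.Limits

universe w₂ w v u

namespace AlgCoh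

variable {C : Type u} [Category.{v} C]

open ZeroObject

/-- In a unital category, the change-of-base functor along the diagonal
`⟨1_X, 1_X⟩ : X ⟶ X ⨯ X` of the basic fibration is coherent only if `X` is a
zero object. -/
theorem isZero_of_coherent_pullback_diag
    [HasZeroObject C] [HasZeroMorphisms C] [HasFiniteLimits C]
    (hU : ∀ X Y : C,
      JointlyStronglyEpi (prod.lift (𝟙 X) (0 : X ⟶ Y)) (prod.lift (0 : Y ⟶ X) (𝟙 Y)))
    (X : C) (h : CoherentFunctor (Over.pullback (diag X))) :
    IsZero X := by
  obtain ⟨-, hJ⟩ := h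
  let T : Over (X ⨯ X) := Over.mk (𝟙 (X ⨯ X))
  let A : Over (X ⨯ X) := Over.mk (prod.lift (𝟙 X) (0 : X ⟶ X))
  let B : Over (X ⨯ X) := Over.mk (prod.lift (0 : X ⟶ X) (𝟙 X))
  let f : A ⟶ T := Over.homMk (prod.lift (𝟙 X) (0 : X ⟶ X)) (by simp [T, A])
  let g : B ⟶ T := Over.homMk (prod.lift (0 : X ⟶ X) (𝟙 X)) (by simp [T, B])
  have hfg : JointlyStronglyEpi f g := by
    intro M P m hm φ f' g' hf hg
    have hml : Mono m.left := @CategoryTheory.Over.mono_left_of_mono _ _ _ _ _ m hm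
    have hf' : f'.left ≫ m.left = prod.lift (𝟙 X) (0 : X ⟶ X) ≫ φ.left := by
      have := congrArg CommaMorphism.left hf
      simpa [f] using this
    have hg' : g'.left ≫ m.left = prod.lift (0 : X ⟶ X) (𝟙 X) ≫ φ.left := by
      have := congrArg CommaMorphism.left hg
      simpa [g] using this
    obtain ⟨l, hl, hu⟩ := hU X X m.left hml φ.left f'.left g'.left hf' hg'
    refine ⟨Over.homMk l ?_, ?_, ?_⟩
    · rw [← Over.w m, ← Category.assoc, hl, Over.w φ]
    · ext
      exact hl
    · intro y hy
      ext
      exact hu y.left (congrArg CommaMorphism.left hy)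
  have hF := hJ f g hfg
  let Z0 : Over X := Over.mk (0 : (0 : C) ⟶ X)
  let m₀ : Z0 ⟶ Over.mk (𝟙 X) := Over.homMk (0 : (0 : C) ⟶ X) (by simp [Z0])
  have hm₀ : Mono m₀ := by
    constructor
    intro W a b _
    ext
    exact (isZero_zero C).eq_of_tgt a.left b.left
  let FT := (Over.pullback (diag X)).obj T
  let φ₀ : FT ⟶ Over.mk (𝟙 X) := Over.homMk FT.hom (by simp)
  have hFA : ((Over.pullback (diag X)).obj A).hom = 0 := by
    show pullback.snd A.hom (diag X) = 0
    have h2 := congrArg (· ≫ (prod.snd : X ⨯ X ⟶ X))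
      (pullback.condition (f := A.hom) (g := diag X))
    simp [A] at h2
    rw [prod.lift_snd, prod.lift_snd] at h2
    exact h2.symm
  have hFB : ((Over.pullback (diag X)).obj B).hom = 0 := by
    show pullback.snd B.hom (diag X) = 0
    have h2 := congrArg (· ≫ (prod.fst : X ⨯ X ⟶ X))
      (pullback.condition (f := B.hom) (g := diag X))
    simp [B] at h2
    rw [prod.lift_fst, prod.lift_fst] at h2
    exact h2.symm
  let f' : (Over.pullback (diag X)).obj A ⟶ Z0 :=
    Over.homMk (0 : _ ⟶ (0 : C)) (by
      have := hFA; simp [Z0] at this ⊢; exact this.symm)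
  let g' : (Over.pullback (diag X)).obj B ⟶ Z0 :=
    Over.homMk (0 : _ ⟶ (0 : C)) (by
      have := hFB; simp [Z0] at this ⊢; exact this.symm)
  have hcf : f' ≫ m₀ = (Over.pullback (diag X)).map f ≫ φ₀ := by
    ext
    have hw : ((Over.pullback (diag X)).map f ≫ φ₀).left
        = ((Over.pullback (diag X)).map f).left ≫ FT.hom := rfl
    have hw2 : ((Over.pullback (diag X)).map f).left ≫ FT.hom
        = ((Over.pullback (diag X)).obj A).hom := Over.w _
    show (f' ≫ m₀).left = _
    rw [hw, hw2, hFA]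
    simp [f', m₀]
  have hcg : g' ≫ m₀ = (Over.pullback (diag X)).map g ≫ φ₀ := by
    ext
    have hw : ((Over.pullback (diag X)).map g ≫ φ₀).left
        = ((Over.pullback (diag X)).map g).left ≫ FT.hom := rfl
    have hw2 : ((Over.pullback (diag X)).map g).left ≫ FT.hom
        = ((Over.pullback (diag X)).obj B).hom := Over.w _
    show (g' ≫ m₀).left = _
    rw [hw, hw2, hFB]
    simp [g', m₀]
  obtain ⟨l, hl, -⟩ := hF m₀ hm₀ φ₀ f' g' hcf hcg
  have hl' : l.left ≫ m₀.left = φ₀.left := congrArg CommaMorphism.left hl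
  have hsnd : pullback.snd T.hom (diag X) = 0 := by
    have hphi : φ₀.left = pullback.snd T.hom (diag X) := rfl
    rw [← hphi, ← hl']
    simp [m₀]
  have hid : 𝟙 X = 0 := by
    have := pullback.lift_snd (f := T.hom) (g := diag X) (diag X) (𝟙 X) (by simp [T])
    rw [← this, hsnd, comp_zero]
  exact (IsZero.iff_id_eq_zero X).mpr hid


end AlgCoh
end

section
/- If a unital category is coherent (all change-of-base functors of the basic fibration f* : C/Y → C/X are coherent), then it is trivial (equivalent to the terminal category). -/
open CategoryTheory CategoryTheory.Limits

universe w₂ w v u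

namespace AlgCoh

variable {C : Type u} [Category.{v} C]

/-- If a unital category is coherent (it is regular with finite coproducts and
every change-of-base functor of the basic fibration is coherent), then it is
trivial: every object is a zero object. -/
theorem unital_coherent_trivial
    [HasZeroObject C] [HasZeroMorphisms C] [HasFiniteLimits C] [HasFiniteCoproducts C]
    (hcoeq : ∀ {X Y : C} (f : X ⟶ Y), HasCoequalizer (pullback.fst f f) (pullback.snd f f))
    (hstab : ∀ {X Y Z : C} (f : X ⟶ Z) (g : Y ⟶ Z),
      Nonempty (RegularEpi g) → Nonempty (RegularEpi (pullback.fst f g)))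
    (hU : ∀ X Y : C,
      JointlyStronglyEpi (prod.lift (𝟙 X) (0 : X ⟶ Y)) (prod.lift (0 : Y ⟶ X) (𝟙 Y)))
    (hcoh : ∀ {X Y : C} (f : X ⟶ Y), CoherentFunctor (Over.pullback f)) :
    ∀ X : C, IsZero X := by
  intro X
  open ZeroObject in
  set Δ : X ⟶ X ⨯ X := prod.lift (𝟙 X) (𝟙 X) with hΔ
  set a : X ⟶ X ⨯ X := prod.lift (𝟙 X) (0 : X ⟶ X) with ha
  set b : X ⟶ X ⨯ X := prod.lift (0 : X ⟶ X) (𝟙 X) with hb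
  have hJ : JointlyStronglyEpi a b := hU X X
  -- the cospan in Over (X ⨯ X)
  let Z : Over (X ⨯ X) := Over.mk (𝟙 (X ⨯ X))
  let A : Over (X ⨯ X) := Over.mk a
  let B : Over (X ⨯ X) := Over.mk b
  let fA : A ⟶ Z := Over.homMk a (by simp [A, Z])
  let fB : B ⟶ Z := Over.homMk b (by simp [B, Z])
  have hJO : JointlyStronglyEpi fA fB := by
    intro M P m hm φ f' g' hf hg
    have hmL : Mono m.left := @Over.mono_left_of_mono _ _ _ _ _ m hm
    have hfL : f'.left ≫ m.left = a ≫ φ.left := congrArg CommaMorphism.left hf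
    have hgL : g'.left ≫ m.left = b ≫ φ.left := congrArg CommaMorphism.left hg
    obtain ⟨l, hl, hluniq⟩ := hJ m.left hmL φ.left f'.left g'.left hfL hgL
    refine ⟨Over.homMk l ?_, ?_, ?_⟩
    · have := Over.w m
      have hφ := Over.w φ
      simp only [Over.mk_hom, Functor.const_obj_obj, Functor.id_obj] at *
      rw [← this, ← Category.assoc, hl, hφ]
    · ext
      exact hl
    · intro y hy
      ext
      exact hluniq y.left (congrArg CommaMorphism.left hy)
  have h2 := (hcoh Δ).2 fA fB hJO
  have hAfst : pullback.fst a Δ = 0 := by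
    have h1 := pullback.condition (f := a) (g := Δ)
    have e1 := congrArg (· ≫ (Limits.prod.fst : X ⨯ X ⟶ X)) h1
    have e2 := congrArg (· ≫ (Limits.prod.snd : X ⨯ X ⟶ X)) h1
    simp [ha, hΔ, prod.lift_fst, prod.lift_snd] at e1 e2
    rw [e1, e2]
  have hAsnd : pullback.snd a Δ = 0 := by
    have h1 := pullback.condition (f := a) (g := Δ)
    have e2 := congrArg (· ≫ (Limits.prod.snd : X ⨯ X ⟶ X)) h1
    simp [ha, hΔ, prod.lift_fst, prod.lift_snd] at e2
    exact e2.symm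
  have hBfst : pullback.fst b Δ = 0 := by
    have h1 := pullback.condition (f := b) (g := Δ)
    have e1 := congrArg (· ≫ (Limits.prod.fst : X ⨯ X ⟶ X)) h1
    have e2 := congrArg (· ≫ (Limits.prod.snd : X ⨯ X ⟶ X)) h1
    simp [hb, hΔ, prod.lift_fst, prod.lift_snd] at e1 e2
    rw [e2, ← e1]
  have hBsnd : pullback.snd b Δ = 0 := by
    have h1 := pullback.condition (f := b) (g := Δ)
    have e1 := congrArg (· ≫ (Limits.prod.fst : X ⨯ X ⟶ X)) h1
    simp [hb, hΔ, prod.lift_fst, prod.lift_snd] at e1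
    exact e1.symm
  -- apply the preserved JSE to a mono from the zero object
  let P₀ : Over X := (Over.pullback Δ).obj Z
  let M₀ : Over X := Over.mk (0 : (0 : C) ⟶ X)
  let m₀ : M₀ ⟶ P₀ := Over.homMk 0 (by simp [M₀])
  have hm₀ : Mono m₀ := by
    have : Mono (m₀.left) := ⟨fun u v _ => by
      apply (isZero_zero C).eq_of_tgt⟩
    exact Over.mono_of_mono_left m₀
  have hmapA : ((Over.pullback Δ).map fA).left = 0 := by
    apply pullback.hom_ext
    · simp [A, Z, fA, hAfst, pullback.lift_fst, pullback.lift_snd]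
    · simp [A, Z, hAsnd, pullback.lift_fst, pullback.lift_snd]
  have hmapB : ((Over.pullback Δ).map fB).left = 0 := by
    apply pullback.hom_ext
    · simp [B, Z, fB, hBfst, pullback.lift_fst, pullback.lift_snd]
    · simp [B, Z, hBsnd, pullback.lift_fst, pullback.lift_snd]
  have hQA : ((Over.pullback Δ).obj A).hom = 0 := by simp [A, hAsnd]
  have hQB : ((Over.pullback Δ).obj B).hom = 0 := by simp [B, hBsnd]
  obtain ⟨l, hl, -⟩ := h2 m₀ hm₀ (𝟙 P₀)
    (Over.homMk 0 (by simp [M₀, A, hAsnd])) (Over.homMk 0 (by simp [M₀, B, hBsnd]))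
    (by
      ext
      simp only [Over.comp_left, Over.homMk_left, Category.comp_id, Over.id_left, m₀,
        zero_comp, comp_zero]
      exact hmapA.symm.trans (Category.comp_id _).symm)
    (by
      ext
      simp only [Over.comp_left, Over.homMk_left, Category.comp_id, Over.id_left, m₀,
        zero_comp, comp_zero]
      exact hmapB.symm.trans (Category.comp_id _).symm)
  have hzl : (𝟙 P₀.left : P₀.left ⟶ P₀.left) = 0 := by
    have := congrArg CommaMorphism.left hl
    simpa [m₀] using this.symm
  have hZP : IsZero P₀.left := (IsZero.iff_id_eq_zero _).2 hzl
  -- P₀.left = pullback (𝟙 (X⨯X)) Δ retracts onto X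
  have hcond : Δ ≫ Z.hom = 𝟙 X ≫ Δ := by simp [Z]
  have hsig : pullback.lift Δ (𝟙 X) hcond ≫ pullback.snd Z.hom Δ = 𝟙 X :=
    pullback.lift_snd _ _ _
  have hz : (𝟙 X : X ⟶ X) = 0 := by
    rw [← hsig, hZP.eq_of_tgt (pullback.lift Δ (𝟙 X) hcond) 0, zero_comp]
  exact (IsZero.iff_id_eq_zero X).2 hz


end AlgCoh
end

section
/- Let C and D be pointed categories with finite limits such that normal closures of monomorphisms exist in C, and let F : C → D be a conservative finite-limit-preserving functor. If F preserves normal closures, then F reflects normal monomorphisms: if F(m) is a normal monomorphism, then m is a normal monomorphism. -/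
open CategoryTheory CategoryTheory.Limits

universe w₂ w v u

namespace AlgCoh

variable {C : Type u} [Category.{v} C]

/-- `n : N ⟶ X` is the normal closure of `m : M ⟶ X`: it is the smallest normal
monomorphism into `X` through which `m` factors. -/
def IsNormalClosure [HasZeroMorphisms C] {M N X : C} (m : M ⟶ X) (n : N ⟶ X) : Prop :=
  Mono n ∧ Nonempty (NormalMono n) ∧ (∃ i : M ⟶ N, i ≫ n = m) ∧
    ∀ ⦃N' : C⦄ (n' : N' ⟶ X), Mono n' → Nonempty (NormalMono n') →
      (∃ j : M ⟶ N', j ≫ n' = m) → ∃ k : N ⟶ N', k ≫ n' = n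

/-- Let `C` and `D` be pointed finitely complete categories such that normal
closures of monomorphisms exist in `C`, and let `F : C ⥤ D` be a conservative
finite-limit-preserving functor preserving normal closures. Then `F` reflects
normal monomorphisms. -/
theorem reflects_normalMono_of_preserves_normal_closures
    {D : Type w} [Category.{w₂} D]
    [HasZeroMorphisms C] [HasZeroMorphisms D]
    [HasFiniteLimits C] [HasFiniteLimits D]
    (F : C ⥤ D) [F.ReflectsIsomorphisms] [PreservesFiniteLimits F]
    (hclos : ∀ {M X : C} (m : M ⟶ X), Mono m →
      ∃ (N : C) (n : N ⟶ X), IsNormalClosure m n)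
    (hpres : ∀ {M N X : C} (m : M ⟶ X) (n : N ⟶ X), Mono m →
      IsNormalClosure m n → IsNormalClosure (F.map m) (F.map n))
    {M X : C} (m : M ⟶ X)
    (hFm : Nonempty (NormalMono (F.map m))) :
    Nonempty (NormalMono m) := by
  -- `F (m)` is a mono, hence `m` is a mono.
  have hFmono : Mono (F.map m) := by
    haveI := hFm.some; infer_instance
  have hm : Mono m := by
    haveI := hFmono
    exact F.mono_of_mono_map hFmono
  -- take a normal closure `n` of `m`
  obtain ⟨N, n, hmono, ⟨hnorm⟩, ⟨i, hi⟩, hmin⟩ := hclos m hm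
  obtain ⟨hFn_mono, -, -, hFmin⟩ :=
    hpres m n hm ⟨hmono, ⟨hnorm⟩, ⟨i, hi⟩, hmin⟩
  -- minimality gives `k : F N ⟶ F M` with `k ≫ F m = F n`
  obtain ⟨k, hk⟩ := hFmin (F.map m) hFmono hFm ⟨𝟙 _, Category.id_comp _⟩
  -- `F i` is an isomorphism
  have hik : F.map i ≫ k = 𝟙 _ := by
    haveI := hFmono
    rw [← cancel_mono (F.map m)]
    rw [Category.assoc, hk, ← F.map_comp, hi, Category.id_comp]
  have hki : k ≫ F.map i = 𝟙 _ := by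
    haveI := hFn_mono
    rw [← cancel_mono (F.map n)]
    rw [Category.assoc, ← F.map_comp, hi, hk, Category.id_comp]
  have : IsIso (F.map i) := ⟨k, hik, hki⟩
  have hiso : IsIso i := isIso_of_reflects_iso i F
  -- transfer the normal mono structure along the iso `i`
  have hw : m ≫ hnorm.g = 0 := by
    rw [← hi, Category.assoc, hnorm.w, comp_zero]
  exact ⟨NormalMono.mk hnorm.Z hnorm.g hw
      (IsLimit.ofIsoLimit hnorm.isLimit
        (Fork.ext (asIso i).symm (by simp [← hi])))⟩

end AlgCoh
end
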